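/- Let (X_n)_{n ≥ 0} be an i.i.d. sequence of integer-valued random variables with ℙ[X_0 ≥ -1] = 1, and let (S_n) be the associated skip-free to the left random walk. Let n ≥ 1 and let x_1, …, x_n be integers with x_i ≥ -1 for all i, with x_1 + ⋯ + x_m ≥ 0 for every m < n, and with x_1 + ⋯ + x_n ≥ -1. Then ℙ[X_0 = x_1, X_1 = x_2, …, X_{n-1} = x_n, η_{-1} < ∞] = c · ∏_{i=1}^{n} ( ℙ[X_0 = x_i] · c^{x_i} ), where η_{-1} = inf{m ≥ 0 : S_m = -1} and c = ℙ[η_{-1} < ∞]. (In other words, conditioned on η_{-1} < ∞, the walk stopped at η_{-1} is the skip-free walk with the Doob-transformed increment distribution k ↦ ℙ[X_0 = k] c^k, stopped at its hitting time of -1.) -/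

import Mathlib

set_option linter.unusedSectionVars false

open MeasureTheory ProbabilityTheory Set

namespace SkipFreeAux

variable {Ω : Type*} [MeasurableSpace Ω] {μ : Measure Ω} [IsProbabilityMeasure μ]
  {X : ℕ → Ω → ℤ}

/-- hitting event for the walk started at time `j` -/
def Hit (X : ℕ → Ω → ℤ) (j : ℕ) (t : ℤ) : Set Ω :=
  {ω | ∃ m : ℕ, ∑ l ∈ Finset.range m, X (j + l) ω = t}

lemma hit_zero (t : ℤ) : Hit X 0 t = {ω | ∃ m : ℕ, ∑ l ∈ Finset.range m, X l ω = t} := by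
  simp [Hit]

lemma hit_eq_iUnion (j : ℕ) (t : ℤ) :
    Hit X j t = ⋃ m : ℕ, (fun ω => ∑ l ∈ Finset.range m, X (j + l) ω) ⁻¹' {t} := by
  ext ω; simp [Hit]

lemma measurableSet_hit (hmeas : ∀ n, Measurable (X n)) (j : ℕ) (t : ℤ) :
    MeasurableSet (Hit X j t) := by
  rw [hit_eq_iUnion]
  exact MeasurableSet.iUnion fun m =>
    (Finset.measurable_sum _ fun l _ => hmeas (j + l)) (measurableSet_singleton t)

lemma map_shift (hmeas : ∀ n, Measurable (X n))
    (hindep : iIndepFun X μ)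
    (hident : ∀ n, IdentDistrib (X n) (X 0) μ μ) (j : ℕ) :
    Measure.map (fun ω l => X (j + l) ω) μ = Measure.map (fun ω l => X (0 + l) ω) μ := by
  have hY : ∀ j : ℕ, Measurable (fun ω (l : ℕ) => X (j + l) ω) := fun j =>
    measurable_pi_lambda _ fun l => hmeas (j + l)
  have key : ∀ (j : ℕ) (s : Finset ℕ) (t : ℕ → Set ℤ), (∀ i, MeasurableSet (t i)) →
      μ ((fun ω l => X (j + l) ω) ⁻¹' ((s : Set ℕ).pi t)) =
        ∏ i ∈ s, μ (X 0 ⁻¹' (t i)) := by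
    intro j s t ht
    have hpre : (fun ω (l : ℕ) => X (j + l) ω) ⁻¹' ((s : Set ℕ).pi t) =
        ⋂ i ∈ s.image (j + ·), X i ⁻¹' (t (i - j)) := by
      ext ω
      simp only [Set.mem_preimage, Set.mem_pi, Set.mem_iInter, Finset.mem_image,
        Finset.mem_coe]
      constructor
      · rintro h i ⟨a, ha, rfl⟩
        simpa using h a ha
      · intro h a ha
        have := h (j + a) ⟨a, ha, rfl⟩
        simpa using this
    rw [hpre, hindep.meas_biInter (fun i _ => ⟨t (i - j), ht _, rfl⟩)]
    rw [Finset.prod_image (fun a _ b _ hab => by omega)]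
    refine Finset.prod_congr rfl fun a _ => ?_
    have : j + a - j = a := by omega
    rw [this]
    exact (hident (j + a)).measure_mem_eq (ht a)
  haveI : ∀ j : ℕ, IsProbabilityMeasure (Measure.map (fun ω (l : ℕ) => X (j + l) ω) μ) :=
    fun j => Measure.isProbabilityMeasure_map (hY j).aemeasurable
  refine ext_of_generate_finite
    (squareCylinders fun _ : ℕ => {s : Set ℤ | MeasurableSet s})
    generateFrom_squareCylinders.symm
    (isPiSystem_squareCylinders (fun _ => MeasurableSpace.isPiSystem_measurableSet)
      (fun _ => by simp)) ?_
    (by rw [@measure_univ _ _ _ (this j), @measure_univ _ _ _ (this 0)])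
  rintro S ⟨s, t, ht, rfl⟩
  simp only [Set.mem_univ_pi, Set.mem_setOf_eq] at ht
  have hSmeas : MeasurableSet ((s : Set ℕ).pi t) :=
    MeasurableSet.pi (Finset.countable_toSet s) fun i _ => ht i
  rw [Measure.map_apply (hY j) hSmeas, Measure.map_apply (hY 0) hSmeas, key j s t ht,
    key 0 s t ht]

lemma meas_hit_shift (hmeas : ∀ n, Measurable (X n))
    (hindep : iIndepFun X μ)
    (hident : ∀ n, IdentDistrib (X n) (X 0) μ μ) (j : ℕ) (t : ℤ) :
    μ (Hit X j t) = μ (Hit X 0 t) := by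
  have hY : ∀ j : ℕ, Measurable (fun ω (l : ℕ) => X (j + l) ω) := fun j =>
    measurable_pi_lambda _ fun l => hmeas (j + l)
  set H : Set (ℕ → ℤ) := {f | ∃ m : ℕ, ∑ l ∈ Finset.range m, f l = t} with hH
  have hHmeas : MeasurableSet H := by
    have : H = ⋃ m : ℕ, (fun f : ℕ → ℤ => ∑ l ∈ Finset.range m, f l) ⁻¹' {t} := by
      ext f; simp [hH]
    rw [this]
    exact MeasurableSet.iUnion fun m =>
      (Finset.measurable_sum _ fun l _ => measurable_pi_apply l) (measurableSet_singleton t)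
  have hp : ∀ j : ℕ, Hit X j t = (fun ω (l : ℕ) => X (j + l) ω) ⁻¹' H := fun _ => rfl
  rw [hp j, hp 0, ← Measure.map_apply (hY j) hHmeas, ← Measure.map_apply (hY 0) hHmeas,
    map_shift hmeas hindep hident j]

/-- σ-algebra of the past before time `j`. -/
def past (X : ℕ → Ω → ℤ) (j : ℕ) : MeasurableSpace Ω :=
  ⨆ i ∈ {i : ℕ | i < j}, MeasurableSpace.comap (X i) inferInstance

lemma measurable_past {j l : ℕ} (hl : l < j) : Measurable[past X j] (X l) := by
  intro s hs
  have h1 : MeasurableSpace.comap (X l) inferInstance ≤ past X j :=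
    le_iSup₂ (f := fun (i : ℕ) (_ : i ∈ {i : ℕ | i < j}) =>
      MeasurableSpace.comap (X i) inferInstance) l hl
  exact h1 _ ⟨s, hs, rfl⟩

lemma measurable_sum_past {j m : ℕ} (hm : m ≤ j) :
    Measurable[past X j] (fun ω => ∑ l ∈ Finset.range m, X l ω) :=
  Finset.measurable_sum _ fun l hl => measurable_past (lt_of_lt_of_le (Finset.mem_range.1 hl) hm)

lemma meas_inter_hit (hmeas : ∀ n, Measurable (X n))
    (hindep : iIndepFun X μ) (j : ℕ) {A : Set Ω}
    (hA : MeasurableSet[past X j] A) (t : ℤ) :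
    μ (A ∩ Hit X j t) = μ A * μ (Hit X j t) := by
  have h_le : ∀ i : ℕ, MeasurableSpace.comap (X i) inferInstance ≤ ‹MeasurableSpace Ω› :=
    fun i => (hmeas i).comap_le
  have hInd := indep_biSup_compl h_le hindep.iIndep {i : ℕ | i < j}
  refine (Indep_iff _ _ _).1 hInd A (Hit X j t) hA ?_
  have hXf : ∀ l : ℕ,
      Measurable[⨆ i ∈ {i : ℕ | i < j}ᶜ, MeasurableSpace.comap (X i) inferInstance]
        (X (j + l)) := by
    intro l s hs
    have h1 : MeasurableSpace.comap (X (j + l)) inferInstance ≤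
        ⨆ i ∈ {i : ℕ | i < j}ᶜ, MeasurableSpace.comap (X i) inferInstance :=
      le_iSup₂ (f := fun (i : ℕ) (_ : i ∈ {i : ℕ | i < j}ᶜ) =>
        MeasurableSpace.comap (X i) inferInstance) (j + l) (by simp)
    exact h1 _ ⟨s, hs, rfl⟩
  have : Hit X j t = ⋃ m : ℕ, (fun ω => ∑ l ∈ Finset.range m, X (j + l) ω) ⁻¹' {t} := by
    ext ω; simp [Hit]
  rw [this]
  exact MeasurableSet.iUnion fun m =>
    (Finset.measurable_sum _ fun l _ => hXf l) (measurableSet_singleton t)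

/-- discrete intermediate value: a walk with steps `≥ -1` starting at `0` that goes below `-1`
hits `-1`. -/
lemma crossing {S : ℕ → ℤ} (h0 : S 0 = 0) (hstep : ∀ i, S i - 1 ≤ S (i + 1)) {j : ℕ}
    (hj : S j ≤ -1) : ∃ i ≤ j, S i = -1 := by
  have hex : ∃ i, S i ≤ -1 := ⟨j, hj⟩
  have hspec := Nat.find_spec hex
  have hle : Nat.find hex ≤ j := Nat.find_min' hex hj
  refine ⟨Nat.find hex, hle, ?_⟩
  rcases Nat.eq_zero_or_pos (Nat.find hex) with h | h
  · rw [h] at hspec; omega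
  · have hprev : ¬ S (Nat.find hex - 1) ≤ -1 := Nat.find_min hex (by omega)
    have h2 := hstep (Nat.find hex - 1)
    rw [Nat.sub_add_cancel h] at h2
    omega

/-- first-hitting-of-`-1`-at-time-`m` event. -/
def FH (X : ℕ → Ω → ℤ) (m : ℕ) : Set Ω :=
  {ω | ∑ l ∈ Finset.range m, X l ω = -1 ∧ ∀ i < m, ∑ l ∈ Finset.range i, X l ω ≠ -1}

lemma fh_eq (m : ℕ) : FH X m =
    ((fun ω => ∑ l ∈ Finset.range m, X l ω) ⁻¹' {-1}) ∩
      ⋂ (i : ℕ) (_ : i < m), ((fun ω => ∑ l ∈ Finset.range i, X l ω) ⁻¹' {-1})ᶜ := by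
  ext ω; simp [FH]

lemma measurableSet_fh_past (m : ℕ) : MeasurableSet[past X m] (FH X m) := by
  rw [fh_eq]
  exact ((measurable_sum_past le_rfl) (measurableSet_singleton _)).inter
    (MeasurableSet.iInter fun i => MeasurableSet.iInter fun hi =>
      ((measurable_sum_past hi.le) (measurableSet_singleton _)).compl)

lemma measurableSet_fh (hmeas : ∀ n, Measurable (X n)) (m : ℕ) :
    MeasurableSet (FH X m) := by
  rw [fh_eq]
  exact ((Finset.measurable_sum _ fun l _ => hmeas l) (measurableSet_singleton _)).inter
    (MeasurableSet.iInter fun i => MeasurableSet.iInter fun hi =>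
      ((Finset.measurable_sum _ fun l _ => hmeas l) (measurableSet_singleton _)).compl)

lemma fh_disjoint : Pairwise (Function.onFun Disjoint (FH (X := X))) := by
  intro m m' hne
  rw [Function.onFun, Set.disjoint_left]
  rintro ω ⟨h1, h2⟩ ⟨h1', h2'⟩
  rcases hne.lt_or_gt with h | h
  · exact h2' m h h1
  · exact h2 m' h h1'

lemma iUnion_fh : (⋃ m, FH X m) = Hit X 0 (-1) := by
  ext ω
  simp only [Set.mem_iUnion, Hit, Set.mem_setOf_eq, zero_add, FH]
  constructor
  · rintro ⟨m, h1, _⟩; exact ⟨m, h1⟩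
  · rintro ⟨m, hm⟩
    have hex : ∃ i, ∑ l ∈ Finset.range i, X l ω = -1 := ⟨m, hm⟩
    exact ⟨Nat.find hex, Nat.find_spec hex, fun i hi => Nat.find_min hex hi⟩

lemma hit_pow (hmeas : ∀ n, Measurable (X n))
    (hindep : iIndepFun X μ)
    (hident : ∀ n, IdentDistrib (X n) (X 0) μ μ)
    (hskip : ∀ᵐ ω ∂μ, -1 ≤ X 0 ω) :
    ∀ k : ℕ, μ (Hit X 0 (-(k : ℤ))) = μ (Hit X 0 (-1)) ^ k := by
  intro k
  induction k with
  | zero =>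
    have : Hit X 0 (-(0 : ℕ) : ℤ) = Set.univ := by
      ext ω
      simp only [Hit, Set.mem_setOf_eq, Set.mem_univ, iff_true]
      exact ⟨0, by simp⟩
    rw [this, pow_zero, measure_univ]
  | succ k ih =>
    set c := μ (Hit X 0 (-1)) with hc
    set U : Set Ω := ⋃ m, (FH X m ∩ Hit X m (-(k : ℤ))) with hU
    -- the complement of the skip-free event is null
    set G : Set Ω := {ω | ∀ i, -1 ≤ X i ω} with hGdef
    have hGc : μ Gᶜ = 0 := by
      have : Gᶜ ⊆ ⋃ i, (X i) ⁻¹' (Set.Iio (-1)) := by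
        intro ω hω
        simp only [hGdef, Set.mem_compl_iff, Set.mem_setOf_eq, not_forall, not_le] at hω
        obtain ⟨i, hi⟩ := hω
        exact Set.mem_iUnion.2 ⟨i, hi⟩
      refine measure_mono_null this (measure_iUnion_null fun i => ?_)
      rw [(hident i).measure_mem_eq measurableSet_Iio]
      have : (X 0) ⁻¹' (Set.Iio (-1)) = {ω | ¬ -1 ≤ X 0 ω} := by
        ext ω; simp [not_le]
      rw [this]
      exact hskip
    -- forward inclusion (a.e.)
    have hsub2 : Hit X 0 (-((k + 1 : ℕ) : ℤ)) ∩ G ⊆ U := by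
      rintro ω ⟨⟨j, hj⟩, hGω⟩
      simp only [zero_add] at hj
      set S : ℕ → ℤ := fun i => ∑ l ∈ Finset.range i, X l ω with hS
      have hstep : ∀ i, S i - 1 ≤ S (i + 1) := by
        intro i
        have : S (i + 1) = S i + X i ω := Finset.sum_range_succ _ _
        have := hGω i
        omega
      have hj' : S j ≤ -1 := by rw [hS]; push_cast at hj ⊢; omega
      obtain ⟨i, hij, hSi⟩ := crossing (by simp [hS]) hstep hj'
      have hex : ∃ i, S i = -1 := ⟨i, hSi⟩
      set m := Nat.find hex with hm
      have hmle : m ≤ j := le_trans (Nat.find_min' hex hSi) hij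
      refine Set.mem_iUnion.2 ⟨m, ⟨Nat.find_spec hex, fun i' hi' => Nat.find_min hex hi'⟩, ?_⟩
      refine ⟨j - m, ?_⟩
      have hsplit : S (m + (j - m)) = S m + ∑ l ∈ Finset.range (j - m), X (m + l) ω :=
        Finset.sum_range_add _ _ _
      rw [Nat.add_sub_cancel' hmle] at hsplit
      have h1 : S m = -1 := Nat.find_spec hex
      have h2 : S j = -((k + 1 : ℕ) : ℤ) := hj
      push_cast at h2 ⊢
      omega
    have hsub1 : U ⊆ Hit X 0 (-((k + 1 : ℕ) : ℤ)) := by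
      rintro ω hω
      obtain ⟨m, ⟨hm1, _⟩, r, hr⟩ := Set.mem_iUnion.1 hω
      refine ⟨m + r, ?_⟩
      have hsplit : ∑ l ∈ Finset.range (m + r), X l ω =
          (∑ l ∈ Finset.range m, X l ω) + ∑ l ∈ Finset.range r, X (m + l) ω :=
        Finset.sum_range_add _ _ _
      simp only [zero_add]
      push_cast
      omega
    -- measure computation
    have hmeasU : ∀ m : ℕ, MeasurableSet (FH X m ∩ Hit X m (-(k : ℤ))) := fun m =>
      (measurableSet_fh hmeas m).inter (measurableSet_hit hmeas m _)
    have hUe : μ (Hit X 0 (-((k + 1 : ℕ) : ℤ))) = μ U := by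
      refine le_antisymm ?_ (measure_mono hsub1)
      calc μ (Hit X 0 (-((k + 1 : ℕ) : ℤ))) ≤ μ (U ∪ Gᶜ) := by
            refine measure_mono fun ω hω => ?_
            by_cases hg : ω ∈ G
            · exact Or.inl (hsub2 ⟨hω, hg⟩)
            · exact Or.inr hg
        _ ≤ μ U + μ Gᶜ := measure_union_le _ _
        _ = μ U := by rw [hGc, add_zero]
    have hdisj : Pairwise (Function.onFun Disjoint
        (fun m => FH X m ∩ Hit X m (-(k : ℤ)))) := fun m m' hne =>
      Disjoint.mono Set.inter_subset_left Set.inter_subset_left (fh_disjoint hne)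
    have hUsum : μ U = ∑' m, μ (FH X m ∩ Hit X m (-(k : ℤ))) :=
      measure_iUnion hdisj hmeasU
    have hterm : ∀ m, μ (FH X m ∩ Hit X m (-(k : ℤ))) = μ (FH X m) * c ^ k := by
      intro m
      rw [meas_inter_hit hmeas hindep m (measurableSet_fh_past m),
        meas_hit_shift hmeas hindep hident, ih]
    have hFHsum : ∑' m, μ (FH X m) = c := by
      rw [← measure_iUnion fh_disjoint (measurableSet_fh hmeas), iUnion_fh]
    rw [hUe, hUsum]
    calc (∑' m, μ (FH X m ∩ Hit X m (-(k : ℤ)))) = ∑' m, μ (FH X m) * c ^ k := by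
          exact tsum_congr hterm
      _ = (∑' m, μ (FH X m)) * c ^ k := ENNReal.tsum_mul_right
      _ = c * c ^ k := by rw [hFHsum]
      _ = c ^ (k + 1) := by rw [pow_succ, mul_comm]

lemma zpow_prod (c : ENNReal) (hc0 : c ≠ 0) (hct : c ≠ ⊤) (f : ℕ → ℤ) (n : ℕ) :
    ∏ i ∈ Finset.range n, c ^ (f i) = c ^ (∑ i ∈ Finset.range n, f i) := by
  induction n with
  | zero => simp
  | succ n ih =>
    rw [Finset.prod_range_succ, Finset.sum_range_succ, ih, ENNReal.zpow_add hc0 hct]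


end SkipFreeAux

open SkipFreeAux

theorem conditioned_walk_doob_transform {Ω : Type*} [MeasurableSpace Ω] (μ : Measure Ω)
    [IsProbabilityMeasure μ] (X : ℕ → Ω → ℤ)
    (hmeas : ∀ n, Measurable (X n))
    (hindep : iIndepFun X μ)
    (hident : ∀ n, IdentDistrib (X n) (X 0) μ μ)
    (hskip : ∀ᵐ ω ∂μ, -1 ≤ X 0 ω)
    (n : ℕ) (hn : 1 ≤ n) (xs : ℕ → ℤ)
    (hxs : ∀ i < n, -1 ≤ xs i)
    (hpartial : ∀ m < n, 0 ≤ ∑ i ∈ Finset.range m, xs i)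
    (htotal : -1 ≤ ∑ i ∈ Finset.range n, xs i) :
    μ {ω | (∀ i < n, X i ω = xs i) ∧
        ∃ m : ℕ, ∑ l ∈ Finset.range m, X l ω = -1} =
      (μ {ω | ∃ m : ℕ, ∑ l ∈ Finset.range m, X l ω = -1}) *
        ∏ i ∈ Finset.range n,
          (μ {ω | X 0 ω = xs i} *
            (μ {ω | ∃ m : ℕ, ∑ l ∈ Finset.range m, X l ω = -1}) ^ (xs i)) := by
  classical
  have hhit0 : {ω | ∃ m : ℕ, ∑ l ∈ Finset.range m, X l ω = -1} = Hit X 0 (-1) := by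
    ext ω; simp [Hit]
  set c := μ (Hit X 0 (-1)) with hcdef
  set s := ∑ i ∈ Finset.range n, xs i with hs
  set A : Set Ω := ⋂ i ∈ Finset.range n, X i ⁻¹' {xs i} with hA
  have hmemA : ∀ ω, ω ∈ A ↔ ∀ i < n, X i ω = xs i := by
    intro ω
    simp [hA, Finset.mem_range]
  -- the event equality
  have hEv : {ω | (∀ i < n, X i ω = xs i) ∧
      ∃ m : ℕ, ∑ l ∈ Finset.range m, X l ω = -1} = A ∩ Hit X n (-1 - s) := by
    ext ω
    simp only [Set.mem_setOf_eq, Set.mem_inter_iff, hmemA, Hit]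
    constructor
    · rintro ⟨h1, m, hm⟩
      refine ⟨h1, ?_⟩
      have hsum : ∀ i ≤ n, ∑ l ∈ Finset.range i, X l ω = ∑ l ∈ Finset.range i, xs l :=
        fun i hi => Finset.sum_congr rfl fun l hl =>
          h1 l (lt_of_lt_of_le (Finset.mem_range.1 hl) hi)
      have hnm : n ≤ m := by
        by_contra h
        push_neg at h
        have := hpartial m h
        rw [← hsum m h.le] at this
        omega
      refine ⟨m - n, ?_⟩
      have hsplit : ∑ l ∈ Finset.range (n + (m - n)), X l ω =
          (∑ l ∈ Finset.range n, X l ω) + ∑ l ∈ Finset.range (m - n), X (n + l) ω :=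
        Finset.sum_range_add _ _ _
      rw [Nat.add_sub_cancel' hnm] at hsplit
      have hsn : ∑ l ∈ Finset.range n, X l ω = s := hsum n le_rfl
      omega
    · rintro ⟨h1, r, hr⟩
      refine ⟨h1, n + r, ?_⟩
      have hsplit : ∑ l ∈ Finset.range (n + r), X l ω =
          (∑ l ∈ Finset.range n, X l ω) + ∑ l ∈ Finset.range r, X (n + l) ω :=
        Finset.sum_range_add _ _ _
      have hsn : ∑ l ∈ Finset.range n, X l ω = s :=
        Finset.sum_congr rfl fun l hl => h1 l (Finset.mem_range.1 hl)
      omega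
  -- measurability of A in the past
  have hApast : MeasurableSet[past X n] A := by
    refine MeasurableSet.biInter (Finset.range n).countable_toSet fun i hi => ?_
    exact measurable_past (Finset.mem_range.1 hi) (measurableSet_singleton _)
  -- product formula for A
  have hApr : μ A = ∏ i ∈ Finset.range n, μ (X 0 ⁻¹' {xs i}) := by
    rw [hA, hindep.meas_biInter (fun i _ => ⟨{xs i}, measurableSet_singleton _, rfl⟩)]
    exact Finset.prod_congr rfl fun i _ =>
      (hident i).measure_mem_eq (measurableSet_singleton _)
  have hp : ∀ i, μ {ω | X 0 ω = xs i} = μ (X 0 ⁻¹' {xs i}) := fun i => rfl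
  -- key: the natural number k with (k : ℤ) = 1 + s
  set k : ℕ := (1 + s).toNat with hk
  have hkz : (k : ℤ) = 1 + s := Int.toNat_of_nonneg (by omega)
  have hLHS : μ {ω | (∀ i < n, X i ω = xs i) ∧
      ∃ m : ℕ, ∑ l ∈ Finset.range m, X l ω = -1} =
      (∏ i ∈ Finset.range n, μ (X 0 ⁻¹' {xs i})) * c ^ k := by
    rw [hEv, meas_inter_hit hmeas hindep n hApast,
      meas_hit_shift hmeas hindep hident, hApr]
    congr 1
    have : (-1 - s : ℤ) = -(k : ℤ) := by omega
    rw [this, hit_pow hmeas hindep hident hskip]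
  rw [hhit0, ← hcdef]
  by_cases hc0 : c = 0
  · rw [hc0, zero_mul]
    have hsub : {ω | (∀ i < n, X i ω = xs i) ∧
        ∃ m : ℕ, ∑ l ∈ Finset.range m, X l ω = -1} ⊆ Hit X 0 (-1) := by
      rintro ω ⟨-, m, hm⟩
      exact ⟨m, by simpa using hm⟩
    have hb := measure_mono (μ := μ) hsub
    rw [← hcdef, hc0] at hb
    exact le_antisymm hb zero_le
  · have hct : c ≠ ⊤ := by rw [hcdef]; exact measure_ne_top μ _
    rw [hLHS]
    have hpr2 : ∏ i ∈ Finset.range n, (μ {ω | X 0 ω = xs i} * c ^ (xs i)) =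
        (∏ i ∈ Finset.range n, μ (X 0 ⁻¹' {xs i})) * c ^ s := by
      rw [Finset.prod_mul_distrib, zpow_prod c hc0 hct xs n, ← hs]
      exact congrArg (· * c ^ s) (Finset.prod_congr rfl fun i _ => hp i)
    rw [hpr2, ← mul_assoc, mul_comm c, mul_assoc]
    congr 1
    calc c ^ k = c ^ (k : ℤ) := (zpow_natCast c k).symm
      _ = c ^ ((1 : ℤ) + s) := by rw [hkz]
      _ = c * c ^ s := by rw [ENNReal.zpow_add hc0 hct, zpow_one]
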